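/- Let f : 2^V → ℝ be submodular (f(A) + f(B) ≥ f(A∩B) + f(A∪B) for all A, B ⊆ V) and monotone (A ⊆ B implies f(A) ≤ f(B)). For a partition V = P₁ ∪ ⋯ ∪ P_k, define g on k-tuples of pairwise disjoint subsets of V by g(X₁,…,X_k) := f(⋃_a (P_a ∩ X_a)). Then g is k-submodular: g(X) + g(Y) ≥ g(X ⊓ Y) + g(X ⊔ Y), where (X ⊓ Y)_a := X_a ∩ Y_a and (X ⊔ Y)_a := (X_a ∪ Y_a) \ ⋃_{b≠a}(X_b ∪ Y_b). -/
import Mathlib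


theorem stmt_7 {V : Type*} (k : ℕ) (f : Set V → ℝ)
    (hsub : ∀ A B : Set V, f (A ∩ B) + f (A ∪ B) ≤ f A + f B)
    (hmono : ∀ A B : Set V, A ⊆ B → f A ≤ f B)
    (P : Fin k → Set V)
    (hPcover : ∀ x : V, ∃ a, x ∈ P a)
    (hPdisj : ∀ a b : Fin k, a ≠ b → Disjoint (P a) (P b))
    (g : (Fin k → Set V) → ℝ)
    (hg : ∀ X : Fin k → Set V, g X = f (⋃ a, P a ∩ X a))
    (X Y : Fin k → Set V)
    (hX : ∀ a b : Fin k, a ≠ b → Disjoint (X a) (X b))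
    (hY : ∀ a b : Fin k, a ≠ b → Disjoint (Y a) (Y b)) :
    g (fun a => X a ∩ Y a) +
      g (fun a => (X a ∪ Y a) \ ⋃ b ∈ {b : Fin k | b ≠ a}, (X b ∪ Y b)) ≤
      g X + g Y := by
  set A := ⋃ a, P a ∩ X a with hA
  set B := ⋃ a, P a ∩ Y a with hB
  rw [hg, hg, hg, hg]
  have h1 : (⋃ a, P a ∩ (X a ∩ Y a)) ⊆ A ∩ B := by
    intro x hx
    simp only [Set.mem_iUnion, Set.mem_inter_iff] at hx
    obtain ⟨a, hp, hxa, hya⟩ := hx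
    exact ⟨Set.mem_iUnion.mpr ⟨a, hp, hxa⟩, Set.mem_iUnion.mpr ⟨a, hp, hya⟩⟩
  have h2 : (⋃ a, P a ∩ ((X a ∪ Y a) \ ⋃ b ∈ {b : Fin k | b ≠ a}, (X b ∪ Y b)))
      ⊆ A ∪ B := by
    intro x hx
    simp only [Set.mem_iUnion, Set.mem_inter_iff, Set.mem_diff] at hx
    obtain ⟨a, hp, hxy, -⟩ := hx
    rcases hxy with h | h
    · exact Or.inl (Set.mem_iUnion.mpr ⟨a, hp, h⟩)
    · exact Or.inr (Set.mem_iUnion.mpr ⟨a, hp, h⟩)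
  calc f (⋃ a, P a ∩ (X a ∩ Y a)) +
        f (⋃ a, P a ∩ ((X a ∪ Y a) \ ⋃ b ∈ {b : Fin k | b ≠ a}, (X b ∪ Y b)))
      ≤ f (A ∩ B) + f (A ∪ B) := add_le_add (hmono _ _ h1) (hmono _ _ h2)
    _ ≤ f A + f B := hsub A B
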